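/- Let W be a manageable multiplicative unitary on H with manageability data (Q, W̃), where W̃ ∈ U(H̄⊗H) satisfies (x⊗u | W | z⊗y) = (z̄⊗Qu | W̃ | x̄⊗Q⁻¹y) and (Q⊗Q)W(Q⊗Q)⁻¹ = W (i.e. W commutes with Q⊗Q). Then W̃ commutes with Qᵀ⊗Q⁻¹, where Qᵀ is the transpose of Q acting on the conjugate Hilbert space H̄. -/

import Mathlib

/-!
STATEMENT 19.  Let `W` be a manageable multiplicative unitary on `H` with
manageability data `(Q, W̃)`, where `W̃ ∈ U(H̄ ⊗ H)` satisfies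
`(x⊗u | W | z⊗y) = (z̄ ⊗ Qu | W̃ | x̄ ⊗ Q⁻¹y)` and `W` commutes with `Q ⊗ Q`.
Then `W̃` commutes with `Qᵀ ⊗ Q⁻¹`, where `Qᵀ` is the transpose of `Q` acting on the
conjugate Hilbert space `H̄`.

Modelling:  `Hbar` together with the conjugate-linear isometric bijection
`conj : H ≃ₛₗᵢ[starRingEnd ℂ] Hbar` plays the role of the conjugate Hilbert space;
`HH` and `HbarH` play the roles of `H ⊗ H` and `H̄ ⊗ H`, via the bilinear maps
`t` and `tbar` whose ranges span dense subspaces and which multiply inner ℂ products.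
`Q` is a positive self-adjoint operator with trivial kernel (realised here with a
bounded inverse `Qinv`), `QT` is its transpose (`QT (conj ξ) = conj (Q ξ)`, using
`Q* = Q`), and `QQ`, `QTQinv` are the operators `Q ⊗ Q` on `HH` and `Qᵀ ⊗ Q⁻¹` on
`HbarH`.
-/


lemma my_inner_ext_of_denseSpan {E : Type*} [NormedAddCommGroup E] [InnerProductSpace ℂ E]
    (s : Set E) (hd : Dense ((Submodule.span ℂ s : Submodule ℂ E) : Set E))
    {u v : E} (h : ∀ a ∈ s, (inner ℂ a u : ℂ) = inner ℂ a v) : u = v := by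
  apply ext_inner_left ℂ
  intro a
  have hsub : ∀ b ∈ Submodule.span ℂ s, (inner ℂ b u : ℂ) = inner ℂ b v := by
    intro b hb
    induction hb using Submodule.span_induction with
    | mem x hx => exact h x hx
    | zero => simp
    | add x y _ _ hx hy => simp [inner_add_left, hx, hy]
    | smul c x _ hx => simp [inner_smul_left, hx]
  have hclosed : IsClosed {b : E | (inner ℂ b u : ℂ) = inner ℂ b v} :=
    isClosed_eq (Continuous.inner continuous_id continuous_const)
      (Continuous.inner continuous_id continuous_const)
  exact hclosed.closure_subset_iff.2 (fun b hb => hsub b hb) (hd a)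

lemma my_clm_ext_of_denseSpan {E F : Type*} [NormedAddCommGroup E] [InnerProductSpace ℂ E]
    [NormedAddCommGroup F] [InnerProductSpace ℂ F]
    (s : Set E) (hd : Dense ((Submodule.span ℂ s : Submodule ℂ E) : Set E))
    {f g : E →L[ℂ] F} (h : ∀ x ∈ s, f x = g x) : f = g := by
  have hsub : ∀ b ∈ Submodule.span ℂ s, f b = g b := by
    intro b hb
    induction hb using Submodule.span_induction with
    | mem x hx => exact h x hx
    | zero => simp
    | add x y _ _ hx hy => simp [map_add, hx, hy]
    | smul c x _ hx => simp [map_smul, hx]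
  ext a
  exact congrFun (Continuous.ext_on hd f.continuous g.continuous (fun b hb => hsub b hb)) a

lemma my_conj_inner {H Hbar : Type*} [NormedAddCommGroup H] [InnerProductSpace ℂ H]
    [NormedAddCommGroup Hbar] [InnerProductSpace ℂ Hbar]
    (conj : H ≃ₛₗᵢ[starRingEnd ℂ] Hbar) (a b : H) :
    (inner ℂ (conj a) (conj b) : ℂ) = inner ℂ b a := by
  have h1 : conj a + conj b = conj (a + b) := (map_add conj a b).symm
  have h2 : conj a - conj b = conj (a - b) := (map_sub conj a b).symm
  have hI : (starRingEnd ℂ) (RCLike.I : ℂ) = -(RCLike.I : ℂ) := RCLike.conj_I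
  have h3 : conj a + (RCLike.I : ℂ) • conj b = conj (a - (RCLike.I : ℂ) • b) := by
    rw [map_sub, LinearIsometryEquiv.map_smulₛₗ, hI, neg_smul, sub_neg_eq_add]
  have h4 : conj a - (RCLike.I : ℂ) • conj b = conj (a + (RCLike.I : ℂ) • b) := by
    rw [map_add, LinearIsometryEquiv.map_smulₛₗ, hI, neg_smul, ← sub_eq_add_neg]
  rw [← inner_conj_symm b a]
  rw [inner_eq_sum_norm_sq_div_four (𝕜 := ℂ) (conj a) (conj b),
    inner_eq_sum_norm_sq_div_four (𝕜 := ℂ) a b]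
  rw [h1, h2, h3, h4, conj.norm_map, conj.norm_map, conj.norm_map, conj.norm_map]
  simp only [map_div₀, map_add, map_sub, map_mul, map_pow, Complex.conj_ofReal,
    RCLike.conj_ofReal, map_ofNat, hI]
  ring

theorem manageability_dual_unitary_commutes_with_QT_tensor_Qinv
    {H Hbar HH HbarH : Type*}
    [NormedAddCommGroup H] [InnerProductSpace ℂ H] [CompleteSpace H]
    [NormedAddCommGroup Hbar] [InnerProductSpace ℂ Hbar] [CompleteSpace Hbar]
    [NormedAddCommGroup HH] [InnerProductSpace ℂ HH] [CompleteSpace HH]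
    [NormedAddCommGroup HbarH] [InnerProductSpace ℂ HbarH] [CompleteSpace HbarH]
    -- the tensor structure of `HH = H ⊗ H` and `HbarH = H̄ ⊗ H`
    (t : H →ₗ[ℂ] H →ₗ[ℂ] HH) (tbar : Hbar →ₗ[ℂ] H →ₗ[ℂ] HbarH)
    (ht : ∀ x y x' y' : H,
        (inner ℂ (t x y) (t x' y') : ℂ) = inner ℂ x x' * inner ℂ y y')
    (htbar : ∀ (ξ ξ' : Hbar) (y y' : H),
        (inner ℂ (tbar ξ y) (tbar ξ' y') : ℂ) = inner ℂ ξ ξ' * inner ℂ y y')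
    (htdense : Dense ((Submodule.span ℂ {v : HH | ∃ x y, v = t x y} : Submodule ℂ HH)
        : Set HH))
    (htbardense : Dense
        ((Submodule.span ℂ {v : HbarH | ∃ ξ y, v = tbar ξ y} : Submodule ℂ HbarH)
          : Set HbarH))
    -- the conjugation `H → H̄`
    (conj : H ≃ₛₗᵢ[starRingEnd ℂ] Hbar)
    -- `Q`: positive, self-adjoint, trivial kernel (with inverse `Qinv`)
    (Q Qinv : H →L[ℂ] H)
    (hQsa : IsSelfAdjoint Q)
    (hQpos : ∀ x : H, 0 ≤ (inner ℂ (Q x) x : ℂ).re)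
    (hQinj : Function.Injective Q)
    (hQinv1 : Q ∘L Qinv = 1) (hQinv2 : Qinv ∘L Q = 1)
    -- the transpose `Qᵀ` of `Q` on `H̄` (using `Q* = Q`)
    (QT : Hbar →L[ℂ] Hbar) (hQT : ∀ ξ : H, QT (conj ξ) = conj (Q ξ))
    -- the operators `Q ⊗ Q` on `HH` and `Qᵀ ⊗ Q⁻¹` on `HbarH`
    (QQ : HH →L[ℂ] HH) (hQQ : ∀ x y : H, QQ (t x y) = t (Q x) (Q y))
    (QTQinv : HbarH →L[ℂ] HbarH)
    (hQTQinv : ∀ (ξ : Hbar) (y : H), QTQinv (tbar ξ y) = tbar (QT ξ) (Qinv y))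
    -- `W` and `W̃` are unitaries
    (W : HH →L[ℂ] HH) (Wt : HbarH →L[ℂ] HbarH)
    (hW : W ∈ unitary (HH →L[ℂ] HH)) (hWt : Wt ∈ unitary (HbarH →L[ℂ] HbarH))
    -- the manageability identity `(x⊗u | W | z⊗y) = (z̄ ⊗ Qu | W̃ | x̄ ⊗ Q⁻¹y)`
    (hman : ∀ x z u y : H,
        (inner ℂ (t x u) (W (t z y)) : ℂ)
          = inner ℂ (tbar (conj z) (Q u)) (Wt (tbar (conj x) (Qinv y))))
    -- `W` commutes with `Q ⊗ Q`
    (hcomm : Commute W QQ) :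
    -- `W̃` commutes with `Qᵀ ⊗ Q⁻¹`
    Commute Wt QTQinv := by
  have hqi1 : ∀ y : H, Q (Qinv y) = y := fun y => by
    have := congrArg (fun f : H →L[ℂ] H => f y) hQinv1; simpa using this
  have hqi2 : ∀ y : H, Qinv (Q y) = y := fun y => by
    have := congrArg (fun f : H →L[ℂ] H => f y) hQinv2; simpa using this
  have hQ' : ∀ x y : H, (inner ℂ (Q x) y : ℂ) = inner ℂ x (Q y) := fun x y => by
    conv_lhs => rw [← hQsa.adjoint_eq]
    exact ContinuousLinearMap.adjoint_inner_left Q y x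
  have hQinv' : ∀ x y : H, (inner ℂ (Qinv x) y : ℂ) = inner ℂ x (Qinv y) := fun x y => by
    calc (inner ℂ (Qinv x) y : ℂ) = inner ℂ (Qinv x) (Q (Qinv y)) := by rw [hqi1]
      _ = inner ℂ (Q (Qinv x)) (Qinv y) := (hQ' _ _).symm
      _ = inner ℂ x (Qinv y) := by rw [hqi1]
  have hQT' : ∀ ξ η : Hbar, (inner ℂ (QT ξ) η : ℂ) = inner ℂ ξ (QT η) := by
    intro ξ η
    obtain ⟨a, rfl⟩ := conj.surjective ξ
    obtain ⟨b, rfl⟩ := conj.surjective η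
    rw [hQT, hQT, my_conj_inner conj, my_conj_inner conj]
    exact (hQ' b a).symm
  have hQQadj : ContinuousLinearMap.adjoint QQ = QQ := by
    apply my_clm_ext_of_denseSpan _ htdense
    rintro v ⟨x, y, rfl⟩
    apply my_inner_ext_of_denseSpan _ htdense
    rintro a ⟨x', y', rfl⟩
    rw [ContinuousLinearMap.adjoint_inner_right, hQQ, hQQ, ht, ht, hQ', hQ']
  have hQQ' : ∀ a b : HH, (inner ℂ (QQ a) b : ℂ) = inner ℂ a (QQ b) := fun a b => by
    conv_lhs => rw [← hQQadj]
    exact ContinuousLinearMap.adjoint_inner_left QQ b a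
  have hTadj : ContinuousLinearMap.adjoint QTQinv = QTQinv := by
    apply my_clm_ext_of_denseSpan _ htbardense
    rintro v ⟨ξ, y, rfl⟩
    apply my_inner_ext_of_denseSpan _ htbardense
    rintro a ⟨ξ', y', rfl⟩
    rw [ContinuousLinearMap.adjoint_inner_right, hQTQinv, hQTQinv, htbar, htbar,
      hQT', hQinv']
  have hT' : ∀ a b : HbarH, (inner ℂ (QTQinv a) b : ℂ) = inner ℂ a (QTQinv b) := fun a b => by
    conv_lhs => rw [← hTadj]
    exact ContinuousLinearMap.adjoint_inner_left QTQinv b a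
  have hWQQ : ∀ c : HH, W (QQ c) = QQ (W c) := fun c => by
    have := congrArg (fun f : HH →L[ℂ] HH => f c) hcomm.eq
    simpa using this
  show Wt * QTQinv = QTQinv * Wt
  apply my_clm_ext_of_denseSpan _ htbardense
  rintro v ⟨ξ, y, rfl⟩
  obtain ⟨x, rfl⟩ := conj.surjective ξ
  apply my_inner_ext_of_denseSpan _ htbardense
  rintro a ⟨η, w, rfl⟩
  obtain ⟨z, rfl⟩ := conj.surjective η
  simp only [ContinuousLinearMap.mul_apply]
  have LHS : (inner ℂ (tbar (conj z) w) (Wt (QTQinv (tbar (conj x) y))) : ℂ)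
      = inner ℂ (t (Q x) (Qinv w)) (W (t z y)) := by
    rw [hQTQinv, hQT]
    conv_lhs => rw [← hqi1 w]
    exact (hman (Q x) z (Qinv w) y).symm
  have RHS : (inner ℂ (tbar (conj z) w) (QTQinv (Wt (tbar (conj x) y))) : ℂ)
      = inner ℂ (t (Q x) (Qinv w)) (W (t z y)) := by
    rw [← hT', hQTQinv, hQT]
    conv_lhs => rw [← hqi1 (Qinv w), ← hqi2 y]
    rw [← hman x (Q z) (Qinv (Qinv w)) (Q y)]
    rw [← hQQ z y, hWQQ, ← hQQ', hQQ, hqi1]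
  rw [LHS, RHS]
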